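/- Assume the closures of F(w) and F(w') are disjoint for all distinct words w, w' of equal length, and assume the separation condition: there exist ε₀ > 0 and n ∈ ℕ such that for every word w of length n there is a word w' of length n with d(a, b) ≥ ε₀ for all a ∈ closure(F(w)) and b ∈ closure(F(w')). Then the similarity map φ possesses an unpredictable point, i.e., there exist x ∈ 𝓕, ε > 0, and sequences of natural numbers (tₖ) and (sₖ) with tₖ → ∞ and sₖ → ∞ such that φ^{tₖ}(x) → x as k → ∞ and d(φ^{tₖ+sₖ}(x), φ^{sₖ}(x)) ≥ ε for all k. -/

import Mathlib

open Filter Set Metric Topology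

/-- The length-`n` prefix word `(i 0, i 1, ..., i (n-1))` of an infinite sequence `i`. -/
def wordPrefix {m : ℕ} (i : ℕ → Fin m) (n : ℕ) : List (Fin m) :=
  (List.range n).map i

/-- Under the separation condition, the similarity map `φ` possesses an unpredictable point. -/
theorem abstract_fractal_similarity_map_unpredictable
    {X : Type*} [MetricSpace X] [CompactSpace X] {m : ℕ} (hm : 2 ≤ m)
    (F : List (Fin m) → Set X)
    (hne : ∀ w : List (Fin m), (F w).Nonempty)
    (hnest : ∀ (w : List (Fin m)) (j : Fin m), F (w ++ [j]) ⊆ F w)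
    (hdiam : Tendsto
      (fun n => ⨆ w : {w : List (Fin m) // w.length = n}, Metric.diam (F w.1))
      atTop (𝓝 0))
    (π : (ℕ → Fin m) → X)
    (hπ : ∀ i : ℕ → Fin m, (⋂ n : ℕ, closure (F (wordPrefix i n))) = {π i})
    (hdisj : ∀ w w' : List (Fin m), w.length = w'.length → w ≠ w' →
      Disjoint (closure (F w)) (closure (F w')))
    (φ : Set.range π → Set.range π)
    (hφ : ∀ i : ℕ → Fin m,
      (φ ⟨π i, Set.mem_range_self i⟩ : X) = π (fun n => i (n + 1)))
    (ε₀ : ℝ) (hε₀ : 0 < ε₀) (n : ℕ)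
    (hsep : ∀ w : List (Fin m), w.length = n → ∃ w' : List (Fin m), w'.length = n ∧
      ∀ a ∈ closure (F w), ∀ b ∈ closure (F w'), ε₀ ≤ dist a b) :
    ∃ x : Set.range π, ∃ ε : ℝ, 0 < ε ∧ ∃ t s : ℕ → ℕ,
      Tendsto t atTop atTop ∧ Tendsto s atTop atTop ∧
      Tendsto (fun k => φ^[t k] x) atTop (𝓝 x) ∧
      ∀ k : ℕ, ε ≤ dist (φ^[t k + s k] x : X) (φ^[s k] x : X) := by
  -- First, `n ≠ 0`.
  rcases Nat.eq_zero_or_pos n with hn0 | hn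
  · exfalso
    obtain ⟨w', hw'l, hw'⟩ := hsep [] (by simp [hn0])
    obtain ⟨a, ha⟩ := hne w'
    have hwe : w' = [] := List.length_eq_zero_iff.mp (hw'l.trans hn0)
    have := hw' a (hwe ▸ subset_closure ha) a (subset_closure ha)
    simp at this
    linarith
  -- The base symbol and the separated pair of words.
  have hm0 : 0 < m := by omega
  set z : Fin m := ⟨0, hm0⟩ with hz
  obtain ⟨w1, hw1l, hw1⟩ := hsep (List.replicate n z) (List.length_replicate (n := n) (a := z))
  -- The recursively defined words `P k`.
  set P : ℕ → List (Fin m) :=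
    fun k => Nat.rec (List.replicate n z) (fun _ p => p ++ p ++ w1) k with hP
  have hP0 : P 0 = List.replicate n z := rfl
  have hPs : ∀ k, P (k + 1) = P k ++ P k ++ w1 := fun k => rfl
  have hls : ∀ k, (P (k + 1)).length = (P k).length + (P k).length + n := by
    intro k; simp only [hPs k, List.length_append, hw1l]
  have hl0 : (P 0).length = n := by simp [hP0]
  have hlen : ∀ k, k + n ≤ (P k).length := by
    intro k
    induction k with
    | zero => simp [hl0]
    | succ k ih => rw [hls k]; omega
  -- Each `P k` is a prefix of all later words.
  have hpref : ∀ k, P k <+: P (k + 1) := by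
    intro k
    rw [hPs k, List.append_assoc]
    exact List.prefix_append _ _
  have hprefLe : ∀ k k', k ≤ k' → P k <+: P k' := by
    intro k k' hk
    induction k' with
    | zero => simp_all
    | succ k' ih =>
      rcases Nat.eq_or_lt_of_le hk with h | h
      · rw [h]
      · exact (ih (by omega)).trans (hpref k')
  -- The infinite sequence `i`.
  set i : ℕ → Fin m := fun j => (P (j + 1)).getD j z with hi
  have hiP : ∀ (k j : ℕ) (h : j < (P k).length), i j = (P k)[j] := by
    intro k j h
    have hj1 : j < (P (j + 1)).length := by have := hlen (j + 1); omega
    rcases le_total (j + 1) k with hk | hk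
    · exact (List.getD_eq_getElem _ _ hj1).trans ((hprefLe _ _ hk).getElem hj1)
    · exact (List.getD_eq_getElem _ _ hj1).trans ((hprefLe _ _ hk).getElem h).symm
  -- Values of `i` in various segments.
  have hseg1 : ∀ (k q : ℕ) (h : q < (P k).length), i (q + (P k).length) = (P k)[q] := by
    intro k q h
    have hq1 : q + (P k).length < (P (k + 1)).length := by rw [hls k]; omega
    rw [hiP (k + 1) _ hq1, List.getElem_of_eq (hPs k) hq1]
    rw [List.getElem_append_left (by simp; omega)]
    rw [List.getElem_append_right (by omega)]
    congr 1
    omega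
  have hseg2 : ∀ (k q : ℕ) (h : q < n),
      i (q + ((P k).length + (P k).length)) = w1[q]'(by omega) := by
    intro k q h
    have hq1 : q + ((P k).length + (P k).length) < (P (k + 1)).length := by rw [hls k]; omega
    rw [hiP (k + 1) _ hq1, List.getElem_of_eq (hPs k) hq1]
    rw [List.getElem_append_right (by simp only [List.length_append]; omega)]
    congr 1
    simp only [List.length_append]
    omega
  have hrep : ∀ q, q < n → i q = z := by
    intro q h
    rw [hiP 0 q (by omega), List.getElem_of_eq hP0 (by omega)]
    simp
  -- The three word identities.
  have hwA : ∀ k, wordPrefix (fun q => i (q + (P k).length)) (P k).length =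
      wordPrefix i (P k).length := by
    intro k
    apply List.ext_getElem (by simp [wordPrefix])
    intro q h1 h2
    simp only [wordPrefix, List.length_map, List.length_range] at h1
    simp only [wordPrefix, List.getElem_map, List.getElem_range]
    exact (hseg1 k q h1).trans (hiP k q h1).symm
  have hwB : ∀ k, wordPrefix (fun q => i (q + (P k).length)) n = List.replicate n z := by
    intro k
    apply List.ext_getElem (by simp [wordPrefix])
    intro q h1 h2
    simp only [wordPrefix, List.length_map, List.length_range] at h1
    simp only [wordPrefix, List.getElem_map, List.getElem_range, List.getElem_replicate]
    have hq : q < (P k).length := by have := hlen k; omega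
    exact (hseg1 k q hq).trans ((hiP k q hq).symm.trans (hrep q h1))
  have hwC : ∀ k, wordPrefix (fun q => i (q + ((P k).length + (P k).length))) n = w1 := by
    intro k
    apply List.ext_getElem (by simp [wordPrefix, hw1l])
    intro q h1 h2
    simp only [wordPrefix, List.length_map, List.length_range] at h1
    simp only [wordPrefix, List.getElem_map, List.getElem_range]
    rw [hseg2 k q h1]
  -- `π j` always lies in the closure of every cylinder containing `j`.
  have hmem : ∀ (j : ℕ → Fin m) (L : ℕ), π j ∈ closure (F (wordPrefix j L)) := by
    intro j L
    have : π j ∈ ⋂ L, closure (F (wordPrefix j L)) := (hπ j).symm ▸ mem_singleton _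
    exact mem_iInter.1 this L
  have hbdd : ∀ s : Set X, Bornology.IsBounded s :=
    fun s => isCompact_univ.isBounded.subset (subset_univ s)
  -- Distance bound from a shared prefix.
  have hdist : ∀ (j j' : ℕ → Fin m) (L : ℕ), wordPrefix j L = wordPrefix j' L →
      dist (π j) (π j') ≤ ⨆ w : {w : List (Fin m) // w.length = L}, Metric.diam (F w.1) := by
    intro j j' L h
    have h1 := hmem j L
    have h2 := hmem j' L
    rw [← h] at h2
    have hb : BddAbove (range fun w : {w : List (Fin m) // w.length = L} =>
        Metric.diam (F w.1)) := by
      refine ⟨Metric.diam (univ : Set X), ?_⟩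
      rintro _ ⟨w, rfl⟩
      exact Metric.diam_mono (subset_univ _) (hbdd _)
    calc dist (π j) (π j')
        ≤ Metric.diam (closure (F (wordPrefix j L))) :=
          Metric.dist_le_diam_of_mem ((hbdd _).closure) h1 h2
      _ = Metric.diam (F (wordPrefix j L)) := Metric.diam_closure _
      _ ≤ _ := le_ciSup hb ⟨wordPrefix j L, by simp [wordPrefix]⟩
  -- Iterates of φ act as the shift.
  have hiter : ∀ (t : ℕ) (j : ℕ → Fin m),
      φ^[t] ⟨π j, Set.mem_range_self j⟩ = ⟨π (fun q => j (q + t)), Set.mem_range_self _⟩ := by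
    intro t
    induction t with
    | zero => intro j; simp
    | succ t ih =>
      intro j
      rw [Function.iterate_succ_apply]
      have h1 : φ ⟨π j, Set.mem_range_self j⟩ =
          ⟨π (fun q => j (q + 1)), Set.mem_range_self _⟩ := by
        apply Subtype.ext
        simpa using hφ j
      rw [h1, ih]
      rfl
  have hltend : Tendsto (fun k => (P k).length) atTop atTop :=
    tendsto_atTop_atTop.2 fun b => ⟨b, fun k hk => le_trans (by omega) (hlen k)⟩
  -- The point and the sequences.
  refine ⟨⟨π i, Set.mem_range_self i⟩, ε₀, hε₀, fun k => (P k).length,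
    fun k => (P k).length, hltend, hltend, ?_, ?_⟩
  -- Recurrence.
  · rw [tendsto_subtype_rng]
    simp only [hiter]
    rw [tendsto_iff_dist_tendsto_zero]
    refine squeeze_zero (fun _ => dist_nonneg) (fun k => ?_) (hdiam.comp hltend)
    exact hdist _ _ (P k).length (hwA k)
  -- Separation.
  · intro k
    simp only [hiter]
    have hb : π (fun q => i (q + (P k).length)) ∈ closure (F (List.replicate n z)) := by
      have := hmem (fun q => i (q + (P k).length)) n
      rwa [hwB k] at this
    have ha : π (fun q => i (q + ((P k).length + (P k).length))) ∈ closure (F w1) := by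
      have := hmem (fun q => i (q + ((P k).length + (P k).length))) n
      rwa [hwC k] at this
    have := hw1 _ hb _ ha
    rw [dist_comm] at this
    exact this
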